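/- Let F be the cumulative distribution function of a probability distribution supported on a finite set {a_1,…,a_m} ⊂ ℝ, let Z_1,…,Z_n be i.i.d. with CDF F, and let F̂ be their empirical CDF. Then for every q ∈ (0,1], the random variable F(F̂⁻¹(q)) stochastically dominates the Beta(⌈nq⌉, n−⌈nq⌉+1) distribution: for every t ∈ ℝ, P( F(F̂⁻¹(q)) ≤ t ) ≤ P( Z_Beta ≤ t ), where Z_Beta ∼ Beta(⌈nq⌉, n−⌈nq⌉+1). -/

import Mathlib

open MeasureTheory ProbabilityTheory

/-- The CDF of the `Beta(k, n - k + 1)` distribution (for `1 ≤ k ≤ n`), whose density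
on `[0,1]` is proportional to `x^(k-1)·(1-x)^(n-k)`. -/
noncomputable def betaCDF (k n : ℕ) (t : ℝ) : ℝ :=
  (∫ x in Set.Icc (0 : ℝ) 1 ∩ Set.Iic t, x ^ (k - 1) * (1 - x) ^ (n - k)) /
    ∫ x in Set.Icc (0 : ℝ) 1, x ^ (k - 1) * (1 - x) ^ (n - k)

/-- The empirical quantile `F̂⁻¹(q) = inf{z : F̂(z) ≥ q}`, where `F̂` is the empirical
CDF of the tuple `x`. -/
noncomputable def empQuantile {n : ℕ} (x : Fin n → ℝ) (q : ℝ) : ℝ :=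
  sInf {z : ℝ | q ≤ (Set.ncard {i : Fin n | x i ≤ z} : ℝ) / n}

section Det

variable {n : ℕ}

noncomputable def Ncnt (x : Fin n → ℝ) (z : ℝ) : ℕ :=
  (Finset.univ.filter (fun i => x i ≤ z)).card

lemma ncard_eq_Ncnt (x : Fin n → ℝ) (z : ℝ) :
    Set.ncard {i : Fin n | x i ≤ z} = Ncnt x z := by
  classical
  rw [Set.ncard_eq_toFinset_card', Set.toFinset_setOf]
  simp [Ncnt]

lemma mem_T_iff (x : Fin n → ℝ) (hn : 1 ≤ n) {q : ℝ} (z : ℝ) :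
    (q ≤ (Set.ncard {i : Fin n | x i ≤ z} : ℝ) / n) ↔ ⌈(n : ℝ) * q⌉₊ ≤ Ncnt x z := by
  rw [ncard_eq_Ncnt]
  have hn0 : (0 : ℝ) < n := by exact_mod_cast hn
  rw [le_div_iff₀ hn0, Nat.ceil_le, mul_comm]

lemma k_pos (hn : 1 ≤ n) {q : ℝ} (hq0 : 0 < q) : 1 ≤ ⌈(n : ℝ) * q⌉₊ := by
  have hn0 : (0 : ℝ) < n := by exact_mod_cast hn
  exact Nat.one_le_iff_ne_zero.mpr (Nat.ceil_pos.mpr (by positivity)).ne'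

lemma empQuantile_spec (x : Fin n → ℝ) (hn : 1 ≤ n) {q : ℝ} (hq0 : 0 < q) (hq1 : q ≤ 1) :
    ⌈(n : ℝ) * q⌉₊ ≤ Ncnt x (empQuantile x q) ∧
      BddBelow {z : ℝ | q ≤ (Set.ncard {i : Fin n | x i ≤ z} : ℝ) / n} := by
  classical
  have hne : (Finset.univ : Finset (Fin n)).Nonempty := ⟨⟨0, hn⟩, Finset.mem_univ _⟩
  set k := ⌈(n : ℝ) * q⌉₊ with hk
  set T := {z : ℝ | q ≤ (Set.ncard {i : Fin n | x i ≤ z} : ℝ) / n} with hT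
  have hmem : ∀ z, z ∈ T ↔ k ≤ Ncnt x z := fun z => mem_T_iff x hn z
  have hk1 : 1 ≤ k := k_pos hn hq0
  set M := Finset.univ.sup' hne x with hM
  have hMT : M ∈ T := by
    rw [hmem]
    have hfil : Finset.univ.filter (fun i => x i ≤ M) = Finset.univ := by
      apply Finset.filter_true_of_mem
      intro i _; exact Finset.le_sup' x (Finset.mem_univ i)
    have hkn : k ≤ n := by
      rw [hk, Nat.ceil_le]
      calc (n : ℝ) * q ≤ n * 1 := mul_le_mul_of_nonneg_left hq1 (by positivity)
        _ = n := mul_one _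
    simpa [Ncnt, hfil] using hkn
  have hbdd : BddBelow T := by
    refine ⟨Finset.univ.inf' hne x, fun z hz => ?_⟩
    rw [hmem] at hz
    have : (Finset.univ.filter (fun i => x i ≤ z)).Nonempty := by
      rw [← Finset.card_pos]
      show 0 < Ncnt x z
      omega
    obtain ⟨i, hi⟩ := this
    exact le_trans (Finset.inf'_le x (Finset.mem_univ i)) (Finset.mem_filter.mp hi).2
  set V := (Finset.univ.image x).filter (fun v => k ≤ Ncnt x v) with hV
  have hVne : V.Nonempty := by
    refine ⟨M, Finset.mem_filter.mpr ⟨?_, (hmem M).mp hMT⟩⟩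
    obtain ⟨i, _, hi⟩ := Finset.exists_mem_eq_sup' hne x
    exact Finset.mem_image.mpr ⟨i, Finset.mem_univ i, hi.symm⟩
  set s := V.min' hVne with hs
  have hsT : s ∈ T := by
    rw [hmem]
    exact (Finset.mem_filter.mp (V.min'_mem hVne)).2
  have hlb : ∀ z ∈ T, s ≤ z := by
    intro z hz
    rw [hmem] at hz
    have hfne : (Finset.univ.filter (fun i => x i ≤ z)).Nonempty := by
      rw [← Finset.card_pos]
      show 0 < Ncnt x z
      omega
    set w := (Finset.univ.filter (fun i => x i ≤ z)).sup' hfne x with hw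
    have hwz : w ≤ z := by
      apply Finset.sup'_le
      intro i hi; exact (Finset.mem_filter.mp hi).2
    have hNw : Ncnt x w = Ncnt x z := by
      unfold Ncnt
      congr 1
      apply Finset.ext
      intro i
      simp only [Finset.mem_filter, Finset.mem_univ, true_and]
      constructor
      · intro h; exact le_trans h hwz
      · intro h
        exact Finset.le_sup' x (Finset.mem_filter.mpr ⟨Finset.mem_univ i, h⟩)
    have hwV : w ∈ V := by
      refine Finset.mem_filter.mpr ⟨?_, by omega⟩
      obtain ⟨i, _, hi⟩ := Finset.exists_mem_eq_sup' hfne x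
      exact Finset.mem_image.mpr ⟨i, Finset.mem_univ i, hi.symm⟩
    exact le_trans (V.min'_le w hwV) hwz
  have hsinf : sInf T = s := le_antisymm (csInf_le hbdd hsT) (le_csInf ⟨M, hMT⟩ hlb)
  constructor
  · show k ≤ Ncnt x (sInf T)
    rw [hsinf]; exact (hmem s).mp hsT
  · exact hbdd

/-- The key deterministic equivalence. -/
lemma F_empQuantile_le_iff (x : Fin n → ℝ) (hn : 1 ≤ n) {q : ℝ} (hq0 : 0 < q) (hq1 : q ≤ 1)
    {F : ℝ → ℝ} (hF : Monotone F) (t : ℝ) :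
    F (empQuantile x q) ≤ t ↔
      ⌈(n : ℝ) * q⌉₊ ≤ (Finset.univ.filter (fun i => F (x i) ≤ t)).card := by
  classical
  obtain ⟨hspec, hbdd⟩ := empQuantile_spec x hn hq0 hq1
  set k := ⌈(n : ℝ) * q⌉₊ with hk
  constructor
  · intro h
    refine le_trans hspec (Finset.card_le_card ?_)
    intro i hi
    have hxi := (Finset.mem_filter.mp hi).2
    exact Finset.mem_filter.mpr ⟨Finset.mem_univ i, le_trans (hF hxi) h⟩
  · intro h
    have hk1 : 1 ≤ k := k_pos hn hq0
    set S := Finset.univ.filter (fun i => F (x i) ≤ t) with hS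
    have hSne : S.Nonempty := by rw [← Finset.card_pos]; omega
    set w := S.sup' hSne x with hw
    have hwT : q ≤ (Set.ncard {i : Fin n | x i ≤ w} : ℝ) / n := by
      rw [mem_T_iff x hn]
      refine le_trans h (Finset.card_le_card ?_)
      intro i hi
      exact Finset.mem_filter.mpr ⟨Finset.mem_univ i, Finset.le_sup' x hi⟩
    have hle : empQuantile x q ≤ w := csInf_le hbdd hwT
    obtain ⟨i0, hi0, hi0w⟩ := Finset.exists_mem_eq_sup' hSne x
    calc F (empQuantile x q) ≤ F w := hF hle
      _ = F (x i0) := by rw [hw, hi0w]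
      _ ≤ t := (Finset.mem_filter.mp hi0).2

end Det

open MeasureTheory intervalIntegral

lemma sum_Icc_telescope (h : ℕ → ℝ) (k n : ℕ) (hkn : k ≤ n) :
    ∑ j ∈ Finset.Icc k n, (h j - h (j + 1)) = h k - h (n + 1) := by
  induction n with
  | zero =>
    interval_cases k
    simp
  | succ m ih =>
    by_cases hk' : k ≤ m
    · rw [Finset.sum_Icc_succ_top (by omega), ih hk']
      ring
    · have hk : k = m + 1 := by omega
      subst hk
      simp

/-- Per-term derivative of the binomial tail. -/
lemma term_hasDerivAt (n j : ℕ) (hj1 : 1 ≤ j) (hjn : j ≤ n) (p : ℝ) :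
    HasDerivAt (fun p : ℝ => (n.choose j : ℝ) * p ^ j * (1 - p) ^ (n - j))
      (((j * n.choose j : ℕ) : ℝ) * p ^ (j - 1) * (1 - p) ^ (n - j)
        - (((j + 1) * n.choose (j + 1) : ℕ) : ℝ) * p ^ j * (1 - p) ^ (n - (j + 1))) p := by
  have h1 : HasDerivAt (fun p : ℝ => p ^ j) ((j : ℝ) * p ^ (j - 1)) p := hasDerivAt_pow j p
  have h2 : HasDerivAt (fun p : ℝ => (1 - p) ^ (n - j))
      (-(((n - j : ℕ) : ℝ) * (1 - p) ^ (n - j - 1))) p := by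
    have hin : HasDerivAt (fun p : ℝ => 1 - p) (-1) p := by
      exact (hasDerivAt_id' p).const_sub 1
    have := (hasDerivAt_pow (n - j) (1 - p)).comp p hin
    simpa [mul_comm, Function.comp_def] using this
  have h3 := ((h1.const_mul ((n.choose j : ℝ))).mul h2)
  have key : (n.choose j : ℝ) * ((j : ℝ) * p ^ (j - 1)) * (1 - p) ^ (n - j)
        + (n.choose j : ℝ) * p ^ j * -(((n - j : ℕ) : ℝ) * (1 - p) ^ (n - j - 1))
      = ((j * n.choose j : ℕ) : ℝ) * p ^ (j - 1) * (1 - p) ^ (n - j)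
        - (((j + 1) * n.choose (j + 1) : ℕ) : ℝ) * p ^ j * (1 - p) ^ (n - (j + 1)) := by
    have hcoef : (j + 1) * n.choose (j + 1) = n.choose j * (n - j) := by
      rw [mul_comm]
      exact Nat.choose_succ_right_eq n j
    have hexp : n - (j + 1) = n - j - 1 := by omega
    rw [hexp, hcoef]
    push_cast
    ring
  rw [← key]
  exact h3

lemma tail_hasDerivAt (k n : ℕ) (hk : 1 ≤ k) (hkn : k ≤ n) (p : ℝ) :
    HasDerivAt (fun p : ℝ => ∑ j ∈ Finset.Icc k n, (n.choose j : ℝ) * p ^ j * (1 - p) ^ (n - j))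
      (((k * n.choose k : ℕ) : ℝ) * (p ^ (k - 1) * (1 - p) ^ (n - k))) p := by
  have hsum : HasDerivAt
      (fun p : ℝ => ∑ j ∈ Finset.Icc k n, (n.choose j : ℝ) * p ^ j * (1 - p) ^ (n - j))
      (∑ j ∈ Finset.Icc k n,
        (((j * n.choose j : ℕ) : ℝ) * p ^ (j - 1) * (1 - p) ^ (n - j)
          - (((j + 1) * n.choose (j + 1) : ℕ) : ℝ) * p ^ j * (1 - p) ^ (n - (j + 1)))) p := by
    apply HasDerivAt.fun_sum
    intro j hj
    rw [Finset.mem_Icc] at hj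
    exact term_hasDerivAt n j (le_trans hk hj.1) hj.2 p
  have htel : (∑ j ∈ Finset.Icc k n,
        (((j * n.choose j : ℕ) : ℝ) * p ^ (j - 1) * (1 - p) ^ (n - j)
          - (((j + 1) * n.choose (j + 1) : ℕ) : ℝ) * p ^ j * (1 - p) ^ (n - (j + 1))))
      = ((k * n.choose k : ℕ) : ℝ) * (p ^ (k - 1) * (1 - p) ^ (n - k)) := by
    have h2 := sum_Icc_telescope
      (fun j => ((j * n.choose j : ℕ) : ℝ) * p ^ (j - 1) * (1 - p) ^ (n - j)) k n hkn
    simp only [Nat.add_sub_cancel] at h2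
    rw [h2]
    have hch : n.choose (n + 1) = 0 := Nat.choose_succ_self n
    rw [hch]
    push_cast
    ring
  rw [← htel]
  exact hsum

/-- Binomial upper tail equals the (scaled) incomplete beta integral. -/
lemma tail_eq_beta (k n : ℕ) (hk : 1 ≤ k) (hkn : k ≤ n) (p : ℝ) :
    ∑ j ∈ Finset.Icc k n, (n.choose j : ℝ) * p ^ j * (1 - p) ^ (n - j)
      = ((k * n.choose k : ℕ) : ℝ) * ∫ x in (0:ℝ)..p, x ^ (k - 1) * (1 - x) ^ (n - k) := by
  have hcont : Continuous (fun x : ℝ => x ^ (k - 1) * (1 - x) ^ (n - k)) := by continuity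
  set c : ℝ := ((k * n.choose k : ℕ) : ℝ) with hc
  set G : ℝ → ℝ := fun p =>
    (∑ j ∈ Finset.Icc k n, (n.choose j : ℝ) * p ^ j * (1 - p) ^ (n - j))
      - c * ∫ x in (0:ℝ)..p, x ^ (k - 1) * (1 - x) ^ (n - k) with hG
  have hderiv : ∀ p : ℝ, HasDerivAt G 0 p := by
    intro p
    have h1 := tail_hasDerivAt k n hk hkn p
    have h2 := ((hcont.integral_hasStrictDerivAt 0 p).hasDerivAt).const_mul c
    have h3 := h1.sub h2
    refine HasDerivAt.congr_deriv h3 ?_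
    rw [hc]
    push_cast
    ring
  have hconst : ∀ p : ℝ, G p = G 0 := by
    intro p
    exact is_const_of_deriv_eq_zero (fun x => (hderiv x).differentiableAt)
      (fun x => (hderiv x).deriv) p 0
  have hG0 : G 0 = 0 := by
    have hz : ∀ j ∈ Finset.Icc k n, (n.choose j : ℝ) * (0:ℝ) ^ j * (1 - 0) ^ (n - j) = 0 := by
      intro j hj
      rw [Finset.mem_Icc] at hj
      have : j ≠ 0 := by omega
      simp [zero_pow this]
    have hz' : ∑ j ∈ Finset.Icc k n, (n.choose j : ℝ) * (0:ℝ) ^ j * (1 - (0:ℝ)) ^ (n - j) = 0 :=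
      Finset.sum_eq_zero hz
    show (∑ j ∈ Finset.Icc k n, (n.choose j : ℝ) * (0:ℝ) ^ j * (1 - (0:ℝ)) ^ (n - j))
      - c * ∫ x in (0:ℝ)..(0:ℝ), x ^ (k - 1) * (1 - x) ^ (n - k) = 0
    rw [hz', intervalIntegral.integral_same]
    ring
  have hfin := hconst p
  rw [hG0] at hfin
  simp only [hG] at hfin
  linarith

section BetaFacts

noncomputable def betaCDF' (k n : ℕ) (t : ℝ) : ℝ :=
  (∫ x in Set.Icc (0 : ℝ) 1 ∩ Set.Iic t, x ^ (k - 1) * (1 - x) ^ (n - k)) /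
    ∫ x in Set.Icc (0 : ℝ) 1, x ^ (k - 1) * (1 - x) ^ (n - k)

variable {k n : ℕ}

lemma cD_eq_one (hk1 : 1 ≤ k) (hkn : k ≤ n) :
    ((k * n.choose k : ℕ) : ℝ) * ∫ x in Set.Icc (0:ℝ) 1, x ^ (k - 1) * (1 - x) ^ (n - k) = 1 := by
  have h := tail_eq_beta k n hk1 hkn 1
  have htail1 : ∑ j ∈ Finset.Icc k n, (n.choose j : ℝ) * (1:ℝ) ^ j * (1 - 1) ^ (n - j) = 1 := by
    rw [Finset.sum_eq_single_of_mem n (Finset.mem_Icc.mpr ⟨hkn, le_refl n⟩)]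
    · simp
    · intro j hj hne
      rw [Finset.mem_Icc] at hj
      have hz : n - j ≠ 0 := by omega
      simp [zero_pow hz]
  have hDI : (∫ x in Set.Icc (0:ℝ) 1, x ^ (k - 1) * (1 - x) ^ (n - k))
      = ∫ x in (0:ℝ)..1, x ^ (k - 1) * (1 - x) ^ (n - k) := by
    rw [intervalIntegral.integral_of_le zero_le_one, MeasureTheory.integral_Icc_eq_integral_Ioc]
  rw [hDI, ← h, htail1]

lemma D_pos (hk1 : 1 ≤ k) (hkn : k ≤ n) :
    0 < ∫ x in Set.Icc (0:ℝ) 1, x ^ (k - 1) * (1 - x) ^ (n - k) := by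
  have h1 := cD_eq_one hk1 hkn
  have hnn : 0 ≤ ∫ x in Set.Icc (0:ℝ) 1, x ^ (k - 1) * (1 - x) ^ (n - k) := by
    apply MeasureTheory.setIntegral_nonneg measurableSet_Icc
    intro x hx
    exact mul_nonneg (pow_nonneg hx.1 _) (pow_nonneg (by linarith [hx.2]) _)
  rcases hnn.lt_or_eq with h | h
  · exact h
  · exfalso; rw [← h] at h1; simp at h1

lemma betaCDF'_eq_tail (hk1 : 1 ≤ k) (hkn : k ≤ n) {t : ℝ} (ht0 : 0 ≤ t) (ht1 : t ≤ 1) :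
    betaCDF' k n t = ∑ j ∈ Finset.Icc k n, (n.choose j : ℝ) * t ^ j * (1 - t) ^ (n - j) := by
  have hDpos := D_pos hk1 hkn
  have hc1 := cD_eq_one hk1 hkn
  have hset : Set.Icc (0:ℝ) 1 ∩ Set.Iic t = Set.Icc 0 t := by
    ext x
    simp only [Set.mem_inter_iff, Set.mem_Icc, Set.mem_Iic]
    exact ⟨fun h => ⟨h.1.1, h.2⟩, fun h => ⟨⟨h.1, le_trans h.2 ht1⟩, h.2⟩⟩
  have hnum : (∫ x in Set.Icc (0:ℝ) t, x ^ (k - 1) * (1 - x) ^ (n - k))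
      = ∫ x in (0:ℝ)..t, x ^ (k - 1) * (1 - x) ^ (n - k) := by
    rw [intervalIntegral.integral_of_le ht0, MeasureTheory.integral_Icc_eq_integral_Ioc]
  unfold betaCDF'
  rw [hset, hnum, div_eq_iff hDpos.ne', tail_eq_beta k n hk1 hkn t]
  linear_combination (-(∫ x in (0:ℝ)..t, x ^ (k - 1) * (1 - x) ^ (n - k))) * hc1

lemma betaCDF'_of_one_le (hk1 : 1 ≤ k) (hkn : k ≤ n) {t : ℝ} (ht : 1 ≤ t) :
    betaCDF' k n t = 1 := by
  have hDpos := D_pos hk1 hkn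
  have hset : Set.Icc (0:ℝ) 1 ∩ Set.Iic t = Set.Icc 0 1 := by
    ext x
    simp only [Set.mem_inter_iff, Set.mem_Icc, Set.mem_Iic]
    exact ⟨fun h => h.1, fun h => ⟨h, le_trans h.2 ht⟩⟩
  unfold betaCDF'
  rw [hset, div_self hDpos.ne']

lemma betaCDF'_nonneg (hk1 : 1 ≤ k) (hkn : k ≤ n) (t : ℝ) : 0 ≤ betaCDF' k n t := by
  apply div_nonneg
  · apply MeasureTheory.setIntegral_nonneg (measurableSet_Icc.inter measurableSet_Iic)
    intro x hx
    exact mul_nonneg (pow_nonneg hx.1.1 _) (pow_nonneg (by linarith [hx.1.2]) _)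
  · exact (D_pos hk1 hkn).le

lemma tail_mono (hk1 : 1 ≤ k) (hkn : k ≤ n) {p t : ℝ} (hp0 : 0 ≤ p) (hpt : p ≤ t)
    (ht1 : t ≤ 1) :
    ∑ j ∈ Finset.Icc k n, (n.choose j : ℝ) * p ^ j * (1 - p) ^ (n - j)
      ≤ ∑ j ∈ Finset.Icc k n, (n.choose j : ℝ) * t ^ j * (1 - t) ^ (n - j) := by
  have hcont : Continuous (fun x : ℝ => x ^ (k - 1) * (1 - x) ^ (n - k)) := by continuity
  rw [tail_eq_beta k n hk1 hkn p, tail_eq_beta k n hk1 hkn t]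
  apply mul_le_mul_of_nonneg_left _ (by positivity)
  have hadd : (∫ x in (0:ℝ)..p, x ^ (k - 1) * (1 - x) ^ (n - k))
        + (∫ x in p..t, x ^ (k - 1) * (1 - x) ^ (n - k))
      = ∫ x in (0:ℝ)..t, x ^ (k - 1) * (1 - x) ^ (n - k) :=
    intervalIntegral.integral_add_adjacent_intervals
      (hcont.intervalIntegrable _ _) (hcont.intervalIntegrable _ _)
  have hnn : 0 ≤ ∫ x in p..t, x ^ (k - 1) * (1 - x) ^ (n - k) := by
    apply intervalIntegral.integral_nonneg hpt
    intro u hu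
    exact mul_nonneg (pow_nonneg (le_trans hp0 hu.1) _)
      (pow_nonneg (by linarith [hu.2]) _)
  linarith

end BetaFacts

lemma betaCDF_eq : betaCDF = betaCDF' := rfl


/-- **The plug-in CDF value at the empirical quantile of i.i.d. finitely supported
samples stochastically dominates `Beta(⌈nq⌉, n - ⌈nq⌉ + 1)`:** for all `t`,
`P(F(F̂⁻¹(q)) ≤ t) ≤ P(Z_Beta ≤ t)`. -/
theorem cdf_empQuantile_dominates_beta
    {Ω ι : Type*} [MeasurableSpace Ω] (P : Measure Ω) [IsProbabilityMeasure P]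
    [Fintype ι] [Nonempty ι]
    (a : ι → ℝ)
    (n : ℕ) (hn : 1 ≤ n)
    (Z : Fin n → Ω → ℝ) (hmeas : ∀ i, Measurable (Z i))
    (hiid : iIndepFun Z P)
    (hident : ∀ i j, IdentDistrib (Z i) (Z j) P P)
    (hsupp : ∀ i ω, Z i ω ∈ Set.range a)
    (F : ℝ → ℝ) (hF : ∀ z, F z = (P {ω | Z ⟨0, hn⟩ ω ≤ z}).toReal)
    (q : ℝ) (hq : q ∈ Set.Ioc (0 : ℝ) 1) (t : ℝ) :
    (P {ω | F (empQuantile (fun i => Z i ω) q) ≤ t}).toReal ≤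
      betaCDF ⌈(n : ℝ) * q⌉₊ n t := by
  classical
  rw [betaCDF_eq]
  obtain ⟨hq0, hq1⟩ := hq
  set k := ⌈(n : ℝ) * q⌉₊ with hkdef
  have hk1 : 1 ≤ k := k_pos hn hq0
  have hkn : k ≤ n := by
    rw [hkdef, Nat.ceil_le]
    calc (n : ℝ) * q ≤ n * 1 := mul_le_mul_of_nonneg_left hq1 (by positivity)
      _ = n := mul_one _
  -- F is monotone and nonnegative
  have hFmono : Monotone F := by
    intro z z' hzz
    rw [hF z, hF z']
    exact ENNReal.toReal_mono (measure_ne_top P _)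
      (measure_mono (fun ω h => le_trans h hzz))
  have hF0 : ∀ z, 0 ≤ F z := fun z => by rw [hF z]; exact ENNReal.toReal_nonneg
  -- dispatch the easy case t < 0
  rcases lt_or_ge t 0 with htneg | ht0
  · have hempty : {ω | F (empQuantile (fun i => Z i ω) q) ≤ t} = ∅ := by
      ext ω
      simp only [Set.mem_setOf_eq, Set.mem_empty_iff_false, iff_false, not_le]
      exact lt_of_lt_of_le htneg (hF0 _)
    rw [hempty]
    simpa using betaCDF'_nonneg hk1 hkn t
  -- the key set
  set i0 : Fin n := ⟨0, hn⟩ with hi0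
  set B := {z : ℝ | F z ≤ t} with hBdef
  have hBmeas : MeasurableSet B := hFmono.measurable measurableSet_Iic
  set pE := P (Z i0 ⁻¹' B) with hpEdef
  set rE := P (Z i0 ⁻¹' Bᶜ) with hrEdef
  set p := pE.toReal with hpdef
  have hpE_ne : pE ≠ ⊤ := measure_ne_top P _
  have hrE_ne : rE ≠ ⊤ := measure_ne_top P _
  have hsum1 : pE + rE = 1 := by
    rw [hpEdef, hrEdef, Set.preimage_compl, measure_add_measure_compl ((hmeas i0) hBmeas)]
    exact measure_univ
  have hp0 : 0 ≤ p := ENNReal.toReal_nonneg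
  have hrp : rE.toReal = 1 - p := by
    have := congrArg ENNReal.toReal hsum1
    rw [ENNReal.toReal_add hpE_ne hrE_ne] at this
    simp only [ENNReal.toReal_one] at this
    linarith
  -- p ≤ min t 1
  have hp1 : p ≤ 1 := by
    have : rE.toReal ≥ 0 := ENNReal.toReal_nonneg
    linarith [hrp]
  have hpt : p ≤ t := by
    by_cases hBA : ((Finset.univ.image a).filter (fun z => z ∈ B)).Nonempty
    · set W := (Finset.univ.image a).filter (fun z => z ∈ B) with hW
      set z0 := W.max' hBA with hz0
      have hz0B : z0 ∈ B := (Finset.mem_filter.mp (W.max'_mem hBA)).2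
      have hpre : Z i0 ⁻¹' B = {ω | Z i0 ω ≤ z0} := by
        ext ω
        simp only [Set.mem_preimage, Set.mem_setOf_eq]
        constructor
        · intro h
          obtain ⟨j, hj⟩ := hsupp i0 ω
          have hmem : Z i0 ω ∈ W := by
            refine Finset.mem_filter.mpr ⟨?_, h⟩
            exact Finset.mem_image.mpr ⟨j, Finset.mem_univ j, hj⟩
          exact W.le_max' _ hmem
        · intro h
          exact le_trans (hFmono h) hz0B
      have : p = F z0 := by
        rw [hpdef, hpEdef, hpre, hF z0]
      rw [this]
      exact hz0B
    · have hpre : Z i0 ⁻¹' B = ∅ := by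
        ext ω
        simp only [Set.mem_preimage, Set.mem_empty_iff_false, iff_false]
        intro h
        obtain ⟨j, hj⟩ := hsupp i0 ω
        exact hBA ⟨Z i0 ω, Finset.mem_filter.mpr
          ⟨Finset.mem_image.mpr ⟨j, Finset.mem_univ j, hj⟩, h⟩⟩
      rw [hpdef, hpEdef, hpre]
      simpa using ht0
  -- events
  set C : Finset (Fin n) → Fin n → Set ℝ := fun S i => if i ∈ S then B else Bᶜ with hC
  set A : Finset (Fin n) → Set Ω := fun S => ⋂ i, Z i ⁻¹' (C S i) with hA
  set 𝒮 : Finset (Finset (Fin n)) :=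
    Finset.univ.powerset.filter (fun S => k ≤ S.card) with h𝒮
  have hCmeas : ∀ S i, MeasurableSet (C S i) := by
    intro S i
    rw [hC]
    by_cases h : i ∈ S <;> simp [h, hBmeas, hBmeas.compl]
  have hAmeas : ∀ S, MeasurableSet (A S) := fun S =>
    MeasurableSet.iInter (fun i => (hmeas i) (hCmeas S i))
  set Wf : Ω → Finset (Fin n) := fun ω => Finset.univ.filter (fun i => F (Z i ω) ≤ t) with hWf
  have hAmem : ∀ ω S, ω ∈ A S ↔ S = Wf ω := by
    intro ω S
    rw [hA]
    simp only [Set.mem_iInter, Set.mem_preimage, hC]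
    constructor
    · intro h
      apply Finset.ext
      intro i
      have hi := h i
      rw [hWf]
      simp only [Finset.mem_filter, Finset.mem_univ, true_and]
      by_cases hiS : i ∈ S
      · rw [if_pos hiS] at hi
        exact ⟨fun _ => hi, fun _ => hiS⟩
      · rw [if_neg hiS] at hi
        exact ⟨fun h' => absurd h' hiS, fun h' => absurd h' hi⟩
    · intro h i
      subst h
      by_cases hiW : i ∈ Wf ω
      · rw [if_pos hiW]
        exact (Finset.mem_filter.mp hiW).2
      · rw [if_neg hiW]
        intro hcon
        exact hiW (Finset.mem_filter.mpr ⟨Finset.mem_univ i, hcon⟩)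
  have hEvent : {ω | F (empQuantile (fun i => Z i ω) q) ≤ t} = ⋃ S ∈ 𝒮, A S := by
    ext ω
    rw [Set.mem_setOf_eq, F_empQuantile_le_iff (fun i => Z i ω) hn hq0 hq1 hFmono t]
    simp only [Set.mem_iUnion]
    constructor
    · intro h
      refine ⟨Wf ω, ?_, (hAmem ω (Wf ω)).mpr rfl⟩
      rw [h𝒮]
      exact Finset.mem_filter.mpr ⟨Finset.mem_powerset.mpr (Finset.subset_univ _), h⟩
    · rintro ⟨S, hS, hωS⟩
      have hSW := (hAmem ω S).mp hωS
      rw [h𝒮] at hS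
      have := (Finset.mem_filter.mp hS).2
      rwa [hSW] at this
  have hdisj : Set.PairwiseDisjoint (𝒮 : Set (Finset (Fin n))) A := by
    intro S hS S' hS' hne
    rw [Function.onFun, Set.disjoint_left]
    intro ω hω hω'
    exact hne (((hAmem ω S).mp hω).trans ((hAmem ω S').mp hω').symm)
  have hPA : ∀ S : Finset (Fin n), P (A S) = pE ^ S.card * rE ^ (n - S.card) := by
    intro S
    have h1 : A S = ⋂ i ∈ Finset.univ, Z i ⁻¹' (C S i) := by
      rw [hA]; simp
    rw [h1, hiid.measure_inter_preimage_eq_mul Finset.univ (fun i _ => hCmeas S i)]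
    have hfac : ∀ i, P (Z i ⁻¹' C S i) = if i ∈ S then pE else rE := by
      intro i
      by_cases hiS : i ∈ S
      · simp only [hC, if_pos hiS]
        rw [hpEdef]
        exact (hident i i0).measure_mem_eq hBmeas
      · simp only [hC, if_neg hiS]
        rw [hrEdef]
        exact (hident i i0).measure_mem_eq hBmeas.compl
    rw [Finset.prod_congr rfl (fun i _ => hfac i), Finset.prod_ite,
      Finset.prod_const, Finset.prod_const]
    have h2 : Finset.univ.filter (fun i => i ∈ S) = S := by ext i; simp
    have h3 : (Finset.univ.filter (fun i => ¬ i ∈ S)).card = n - S.card := by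
      have hcompl : Finset.univ.filter (fun i => ¬ i ∈ S) = Sᶜ := by ext i; simp
      rw [hcompl, Finset.card_compl, Fintype.card_fin]
    rw [h2, h3]
  -- total probability
  rw [hEvent, measure_biUnion_finset hdisj (fun S _ => hAmeas S)]
  have hterm_ne : ∀ S : Finset (Fin n), pE ^ S.card * rE ^ (n - S.card) ≠ ⊤ :=
    fun S => ENNReal.mul_ne_top (ENNReal.pow_ne_top hpE_ne) (ENNReal.pow_ne_top hrE_ne)
  rw [Finset.sum_congr rfl (fun S _ => hPA S), ENNReal.toReal_sum (fun S _ => hterm_ne S)]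
  have htermR : ∀ S : Finset (Fin n),
      (pE ^ S.card * rE ^ (n - S.card)).toReal = p ^ S.card * (1 - p) ^ (n - S.card) := by
    intro S
    rw [ENNReal.toReal_mul, ENNReal.toReal_pow, ENNReal.toReal_pow, hrp]
  rw [Finset.sum_congr rfl (fun S _ => htermR S)]
  -- regroup by cardinality
  have hregroup : ∑ S ∈ 𝒮, p ^ S.card * (1 - p) ^ (n - S.card)
      = ∑ j ∈ Finset.Icc k n, (n.choose j : ℝ) * p ^ j * (1 - p) ^ (n - j) := by
    rw [h𝒮, Finset.sum_filter, Finset.sum_powerset]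
    have hinner : ∀ j ∈ Finset.range ((Finset.univ : Finset (Fin n)).card + 1),
        (∑ S ∈ Finset.powersetCard j (Finset.univ : Finset (Fin n)),
          (if k ≤ S.card then p ^ S.card * (1 - p) ^ (n - S.card) else 0))
        = if k ≤ j then (n.choose j : ℝ) * p ^ j * (1 - p) ^ (n - j) else 0 := by
      intro j _
      have hcongr : ∀ S ∈ Finset.powersetCard j (Finset.univ : Finset (Fin n)),
          (if k ≤ S.card then p ^ S.card * (1 - p) ^ (n - S.card) else 0)
          = if k ≤ j then p ^ j * (1 - p) ^ (n - j) else 0 := by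
        intro S hS
        rw [(Finset.mem_powersetCard.mp hS).2]
      rw [Finset.sum_congr rfl hcongr, Finset.sum_const, Finset.card_powersetCard,
        Finset.card_univ, Fintype.card_fin, nsmul_eq_mul]
      split
      · ring
      · ring
    rw [Finset.sum_congr rfl hinner, Finset.card_univ, Fintype.card_fin]
    have hfil : Finset.Icc k n = Finset.filter (fun j => k ≤ j) (Finset.range (n + 1)) := by
      ext j
      simp only [Finset.mem_Icc, Finset.mem_filter, Finset.mem_range]
      omega
    rw [hfil, Finset.sum_filter]
  rw [hregroup]
  -- final comparison
  rcases le_or_gt t 1 with ht1 | ht1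
  · rw [betaCDF'_eq_tail hk1 hkn ht0 ht1]
    exact tail_mono hk1 hkn hp0 hpt ht1
  · rw [betaCDF'_of_one_le hk1 hkn ht1.le]
    calc ∑ j ∈ Finset.Icc k n, (n.choose j : ℝ) * p ^ j * (1 - p) ^ (n - j)
        ≤ ∑ j ∈ Finset.Icc k n, (n.choose j : ℝ) * 1 ^ j * (1 - 1) ^ (n - j) :=
          tail_mono hk1 hkn hp0 hp1 le_rfl
      _ = 1 := by
          rw [Finset.sum_eq_single_of_mem n (Finset.mem_Icc.mpr ⟨hkn, le_refl n⟩)]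
          · simp
          · intro j hj hne
            rw [Finset.mem_Icc] at hj
            have hz : n - j ≠ 0 := by omega
            simp [zero_pow hz]
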